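/- The mean bubble size over all linear chord diagrams on 2n vertices is asymptotic to n: the sequence n ↦ (∑_{p=1}^{2n} p·B_{n,p}) / (n · ∑_{p=1}^{2n} B_{n,p}) tends to 1 as n → ∞. -/

import Mathlib

open Finset

/-- A linear chord diagram on `2*n` vertices: a fixed-point-free involution of `Fin (2*n)`.
Vertex `v ∈ {1,...,2n}` is represented by the index `v-1 : Fin (2*n)`. -/
def IsLCD (n : ℕ) (f : Fin (2*n) → Fin (2*n)) : Prop :=
  ∀ i, f (f i) = i ∧ f i ≠ i

/-- The chord `{i, i+1}` (1-based vertices) is a short chord of `f`. -/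
def IsShort (n : ℕ) (f : Fin (2*n) → Fin (2*n)) (i : ℕ) : Prop :=
  ∃ (_h1 : 1 ≤ i) (h2 : i < 2*n), f ⟨i-1, by omega⟩ = ⟨i, h2⟩

/-- The interval `[a,b] ⊆ {1,...,2n}` (1-based) is a bubble of the diagram `f`:
it contains no short chord, its left end is the start of the diagram or is preceded
by the short chord `{a-2,a-1}`, and its right end is the end of the diagram or is
followed by the short chord `{b+1,b+2}`. -/
def IsBubble (n : ℕ) (f : Fin (2*n) → Fin (2*n)) (a b : ℕ) : Prop :=
  1 ≤ a ∧ a ≤ b ∧ b ≤ 2*n ∧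
  (∀ i, a ≤ i → i + 1 ≤ b → ¬ IsShort n f i) ∧
  (a = 1 ∨ IsShort n f (a-2)) ∧
  (b = 2*n ∨ IsShort n f (b+1))

open scoped Classical in
/-- `B n p` : the number of pairs `(D, [a,b])` where `D` is a linear chord diagram on
`2n` vertices and `[a,b]` is a bubble of `D` of size `p = b - a + 1`. -/
noncomputable def B (n p : ℕ) : ℕ :=
  ((univ ×ˢ (Finset.Icc 1 (2*n) ×ˢ Finset.Icc 1 (2*n))).filter
    (fun x : (Fin (2*n) → Fin (2*n)) × ℕ × ℕ =>
      IsLCD n x.1 ∧ IsBubble n x.1 x.2.1 x.2.2 ∧ x.2.2 - x.2.1 + 1 = p)).card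

open scoped Classical in
/-- `d n s` : the number of linear chord diagrams on `2n` vertices having exactly `s`
short chords. -/
noncomputable def d (n s : ℕ) : ℕ :=
  (univ.filter (fun f : Fin (2*n) → Fin (2*n) =>
    IsLCD n f ∧ ((Finset.Icc 1 (2*n-1)).filter (fun i => IsShort n f i)).card = s)).card

open scoped Classical in
/-- `pathMatch m j` : the number of `j`-edge matchings of the path graph on `m` vertices
`{1,...,m}` with edges `{i,i+1}`, `1 ≤ i ≤ m-1`.  An edge is encoded by its left
endpoint; a set of edges is a matching iff no two left endpoints are consecutive. -/
noncomputable def pathMatch (m j : ℕ) : ℕ :=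
  (((Finset.Icc 1 (m-1)).powerset).filter
    (fun S => S.card = j ∧ ∀ i ∈ S, i + 1 ∉ S)).card

/-- The double factorial `(2m-1)!! = (2m)! / (2^m * m!)`, so `(-1)!! = 1`. -/
def doubleFact (m : ℕ) : ℕ := (2*m).factorial / (2^m * m.factorial)

open scoped Classical

noncomputable def invoS (α : Type*) [Fintype α] : Finset (α → α) :=
  univ.filter (fun f => ∀ i, f (f i) = i ∧ f i ≠ i)

lemma mem_invoS {α : Type*} [Fintype α] {f : α → α} :
    f ∈ invoS α ↔ ∀ i, f (f i) = i ∧ f i ≠ i := by simp [invoS]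

noncomputable def tc (m : ℕ) : ℕ := (invoS (Fin m)).card

/-- Cardinality of a filtered finset with a pinned classical decidability instance. -/
noncomputable def cardF {β : Type*} (s : Finset β) (p : β → Prop) : ℕ :=
  (@Finset.filter β p (Classical.decPred p) s).card

lemma mem_filterF {β : Type*} {s : Finset β} {p : β → Prop} {x : β} :
    x ∈ @Finset.filter β p (Classical.decPred p) s ↔ x ∈ s ∧ p x :=
  Finset.mem_filter

lemma cardF_eq {β : Type*} (s : Finset β) (p : β → Prop) [inst : DecidablePred p] :
    (s.filter p).card = cardF s p := by
  unfold cardF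
  congr 1
  ext x
  rw [mem_filterF, Finset.mem_filter]

lemma cardF_congr {β : Type*} (s : Finset β) {p q : β → Prop} (h : ∀ x ∈ s, p x ↔ q x) :
    cardF s p = cardF s q :=
  congrArg Finset.card (Finset.filter_congr h)

lemma conj_mem_invoS {α β : Type*} [Fintype α] [Fintype β] (e : α ≃ β) {f : α → α}
    (hf : f ∈ invoS α) : (e ∘ f ∘ e.symm) ∈ invoS β := by
  rw [mem_invoS] at hf ⊢
  intro i
  refine ⟨?_, ?_⟩
  · simp [Function.comp, (hf _).1]
  · simp only [Function.comp_apply]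
    intro hc
    exact (hf (e.symm i)).2 (by simpa using congrArg e.symm hc)

lemma invoS_card_eq {α β : Type*} [Fintype α] [Fintype β]
    (h : Fintype.card α = Fintype.card β) : (invoS α).card = (invoS β).card := by
  obtain e := Fintype.equivOfCardEq h
  refine Finset.card_nbij (fun f => e ∘ f ∘ e.symm) (fun f hf => conj_mem_invoS e (by simpa using hf)) ?_ ?_
  · intro f hf g hg hfg
    funext x
    simpa using congrFun hfg (e x)
  · intro g hg
    refine ⟨e.symm ∘ g ∘ e, ?_, ?_⟩
    · simpa using conj_mem_invoS e.symm (by simpa using hg)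
    · funext x; simp

lemma card_invoS (α : Type*) [Fintype α] : (invoS α).card = tc (Fintype.card α) :=
  invoS_card_eq (by simp)

variable {α : Type*} [Fintype α] [DecidableEq α]

noncomputable def extFun (j k : α) (g : {x : α // x ≠ j ∧ x ≠ k} → {x : α // x ≠ j ∧ x ≠ k}) :
    α → α :=
  fun x => if hj : x = j then k else if hk : x = k then j else (g ⟨x, hj, hk⟩).val

lemma chord_card (j k : α) (hjk : j ≠ k) (p : (α → α) → Prop)
    (q : ({x : α // x ≠ j ∧ x ≠ k} → {x : α // x ≠ j ∧ x ≠ k}) → Prop)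
    (hpq : ∀ g ∈ invoS {x : α // x ≠ j ∧ x ≠ k}, (p (extFun j k g) ↔ q g)) :
    cardF (invoS α) (fun f => f j = k ∧ p f)
      = cardF (invoS {x : α // x ≠ j ∧ x ≠ k}) q := by
  unfold cardF
  refine (Finset.card_bij (fun g _ => extFun j k g) ?_ ?_ ?_).symm
  · intro g hg
    rw [mem_filterF] at hg
    have hginv := mem_invoS.mp hg.1
    rw [mem_filterF]
    have ej : extFun j k g j = k := by simp [extFun]
    have ek : extFun j k g k = j := by
      simp only [extFun]
      rw [dif_neg hjk.symm]
      simp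
    refine ⟨mem_invoS.mpr ?_, ?_, (hpq g hg.1).mpr hg.2⟩
    · intro x
      by_cases hj : x = j
      · subst hj
        exact ⟨by rw [ej, ek], by rw [ej]; exact hjk.symm⟩
      · by_cases hk : x = k
        · subst hk
          exact ⟨by rw [ek, ej], by rw [ek]; exact hjk⟩
        · have h1 : extFun j k g x = (g ⟨x, hj, hk⟩).val := by simp [extFun, hj, hk]
          have hne := (g ⟨x, hj, hk⟩).2
          constructor
          · rw [h1]
            have h2 : extFun j k g (g ⟨x, hj, hk⟩).val = (g (g ⟨x, hj, hk⟩)).val := by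
              simp [extFun, hne.1, hne.2]
            rw [h2, (hginv _).1]
          · rw [h1]
            intro hc
            exact (hginv ⟨x, hj, hk⟩).2 (Subtype.ext hc) |>.elim
    · exact ej
  · intro g₁ h₁ g₂ h₂ he
    funext x
    have := congrFun he x.val
    simp only [extFun, dif_neg x.2.1, dif_neg x.2.2] at this
    have hx : (⟨x.val, x.2.1, x.2.2⟩ : {x : α // x ≠ j ∧ x ≠ k}) = x := rfl
    rw [hx] at this
    exact Subtype.ext this
  · intro f hf
    rw [mem_filterF] at hf
    obtain ⟨hfi, hfj, hpf⟩ := hf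
    have hfinv := mem_invoS.mp hfi
    have hffk : f k = j := by
      have := (hfinv j).1
      rwa [hfj] at this
    have hinj : Function.Injective f := by
      intro a b hab
      have := congrArg f hab
      rwa [(hfinv a).1, (hfinv b).1] at this
    have hmem : ∀ x : {x : α // x ≠ j ∧ x ≠ k}, f x.val ≠ j ∧ f x.val ≠ k := by
      intro x
      constructor
      · intro hc
        exact x.2.2 (hinj (hc.trans hffk.symm))
      · intro hc
        exact x.2.1 (hinj (hc.trans hfj.symm))
    set g : {x : α // x ≠ j ∧ x ≠ k} → {x : α // x ≠ j ∧ x ≠ k} :=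
      fun x => ⟨f x.val, hmem x⟩ with hgdef
    have hgmem : g ∈ invoS {x : α // x ≠ j ∧ x ≠ k} := by
      rw [mem_invoS]
      intro x
      constructor
      · exact Subtype.ext ((hfinv x.val).1)
      · intro hc
        exact (hfinv x.val).2 (congrArg Subtype.val hc)
    have hext : extFun j k g = f := by
      funext x
      by_cases hj : x = j
      · subst hj; simp [extFun, hfj]
      · by_cases hk : x = k
        · subst hk
          simp only [extFun]
          rw [dif_neg hjk.symm]
          simpa using hffk.symm
        · simp [extFun, hj, hk, hgdef]
    refine ⟨g, mem_filterF.mpr ⟨hgmem, (hpq g hgmem).mp (by rw [hext]; exact hpf)⟩, hext⟩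

lemma card_subtype_ne_ne (j k : α) (hjk : j ≠ k) :
    Fintype.card {x : α // x ≠ j ∧ x ≠ k} = Fintype.card α - 2 := by
  rw [Fintype.card_subtype]
  have : (univ.filter (fun x => x ≠ j ∧ x ≠ k)) = (univ.erase j).erase k := by
    ext x; simp [and_comm]
  rw [this, Finset.card_erase_of_mem (by simp [hjk.symm]), Finset.card_erase_of_mem (by simp),
    Finset.card_univ]
  omega

lemma chord_card_one (j k : α) (hjk : j ≠ k) :
    cardF (invoS α) (fun f => f j = k) = tc (Fintype.card α - 2) := by
  have h := chord_card j k hjk (fun _ => True) (fun _ => True) (fun _ _ => Iff.rfl)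
  have h1 : cardF (invoS α) (fun f => f j = k)
      = cardF (invoS α) (fun f => f j = k ∧ True) := cardF_congr _ (by simp)
  have h2 : cardF (invoS {x : α // x ≠ j ∧ x ≠ k}) (fun _ => True)
      = (invoS {x : α // x ≠ j ∧ x ≠ k}).card := by
    unfold cardF
    congr 1
    ext x
    rw [mem_filterF]
    simp
  rw [h1, h, h2, card_invoS, card_subtype_ne_ne j k hjk]

lemma chord_card_two (j k j' k' : α) (hjk : j ≠ k) (hj' : j' ≠ j ∧ j' ≠ k)
    (hk' : k' ≠ j ∧ k' ≠ k) (hjk' : j' ≠ k') :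
    cardF (invoS α) (fun f => f j = k ∧ f j' = k') = tc (Fintype.card α - 4) := by
  have hpq : ∀ g ∈ invoS {x : α // x ≠ j ∧ x ≠ k},
      ((fun f => f j' = k') (extFun j k g) ↔ (fun g => g ⟨j', hj'⟩ = ⟨k', hk'⟩) g) := by
    intro g hg
    have hh : extFun j k g j' = (g ⟨j', hj'⟩).val := by simp [extFun, hj'.1, hj'.2]
    show extFun j k g j' = k' ↔ g ⟨j', hj'⟩ = ⟨k', hk'⟩
    rw [hh]
    exact ⟨fun h => Subtype.ext h, fun h => congrArg Subtype.val h⟩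
  have h := chord_card j k hjk (fun f => f j' = k')
      (fun g => g ⟨j', hj'⟩ = ⟨k', hk'⟩) hpq
  have hne : (⟨j', hj'⟩ : {x : α // x ≠ j ∧ x ≠ k}) ≠ ⟨k', hk'⟩ := by
    simp [Subtype.ext_iff, hjk']
  refine Eq.trans ?_ ((chord_card_one (⟨j', hj'⟩ : {x : α // x ≠ j ∧ x ≠ k}) ⟨k', hk'⟩ hne).trans ?_)
  · exact h
  · rw [card_subtype_ne_ne j k hjk, Nat.sub_sub]

lemma tc_zero : tc 0 = 1 := by
  rw [tc, invoS]
  rw [Finset.filter_true_of_mem (fun f _ => fun i => i.elim0)]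
  simp

lemma tc_succ (m : ℕ) : tc (m + 2) = (m + 1) * tc m := by
  have hmap : ∀ f ∈ invoS (Fin (m+2)), f 0 ∈ univ.erase (0 : Fin (m+2)) := by
    intro f hf
    simp [Finset.mem_erase, ((mem_invoS.mp hf) 0).2]
  have key : ∀ k ∈ univ.erase (0 : Fin (m+2)),
      ((invoS (Fin (m+2))).filter (fun f => f 0 = k)).card = tc m := by
    intro k hk
    rw [cardF_eq]
    have h1 := chord_card_one (0 : Fin (m+2)) k (Ne.symm (Finset.mem_erase.mp hk).1)
    have h2 : Fintype.card (Fin (m+2)) - 2 = m := by simp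
    rw [h2] at h1
    exact h1
  rw [tc, Finset.card_eq_sum_card_fiberwise hmap, Finset.sum_congr rfl key]
  rw [Finset.sum_const, Finset.card_erase_of_mem (Finset.mem_univ _), Finset.card_univ]
  simp [Fintype.card_fin, mul_comm]

lemma tc_even_pos (n : ℕ) : 0 < tc (2 * n) := by
  induction n with
  | zero => simp [tc_zero]
  | succ n ih =>
    have : 2 * (n + 1) = 2 * n + 2 := by ring
    rw [this, tc_succ]
    positivity

lemma cardF_singleton_pos {a : ℕ} {p : ℕ → Prop} (h : p a) : cardF {a} p = 1 := by
  unfold cardF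
  have : @Finset.filter _ p (Classical.decPred p) {a} = {a} := by
    ext x
    rw [mem_filterF, Finset.mem_singleton]
    constructor
    · exact fun hx => hx.1
    · rintro rfl; exact ⟨rfl, h⟩
  rw [this, Finset.card_singleton]

lemma cardF_singleton_neg {a : ℕ} {p : ℕ → Prop} (h : ¬ p a) : cardF {a} p = 0 := by
  unfold cardF
  have : @Finset.filter _ p (Classical.decPred p) {a} = ∅ := by
    ext x
    rw [mem_filterF, Finset.mem_singleton]
    simp only [Finset.notMem_empty, iff_false]
    rintro ⟨rfl, hx⟩
    exact h hx
  rw [this, Finset.card_empty]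
-- === Structural per-diagram lemmas ===

noncomputable def shortSet (n : ℕ) (f : Fin (2*n) → Fin (2*n)) : Finset ℕ :=
  @Finset.filter _ (fun i => IsShort n f i) (Classical.decPred _) (Finset.Icc 1 (2*n-1))

noncomputable def bubSet (n : ℕ) (f : Fin (2*n) → Fin (2*n)) : Finset (ℕ × ℕ) :=
  @Finset.filter _ (fun ab => IsBubble n f ab.1 ab.2) (Classical.decPred _)
    (Finset.Icc 1 (2*n) ×ˢ Finset.Icc 1 (2*n))

lemma isShort_bounds {n f i} (h : IsShort n f i) : 1 ≤ i ∧ i < 2*n := by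
  obtain ⟨h1, h2, -⟩ := h; exact ⟨h1, h2⟩

lemma mem_shortSet {n f i} : i ∈ shortSet n f ↔ IsShort n f i := by
  rw [shortSet, mem_filterF]
  constructor
  · exact fun h => h.2
  · intro h
    have := isShort_bounds h
    exact ⟨Finset.mem_Icc.mpr ⟨this.1, by omega⟩, h⟩

lemma mem_bubSet {n f a b} : (a, b) ∈ bubSet n f ↔ IsBubble n f a b := by
  rw [bubSet, mem_filterF]
  constructor
  · exact fun h => h.2
  · intro h
    obtain ⟨h1, h2, h3, -⟩ := id h
    exact ⟨Finset.mem_product.mpr ⟨Finset.mem_Icc.mpr ⟨h1, by omega⟩,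
      Finset.mem_Icc.mpr ⟨by omega, h3⟩⟩, h⟩

lemma short_not_succ {n f} (hf : IsLCD n f) {i : ℕ} (h1 : IsShort n f i) :
    ¬ IsShort n f (i+1) := by
  obtain ⟨hi1, hi2, he1⟩ := h1
  rintro ⟨hj1, hj2, he2⟩
  have hinv := (hf ⟨i-1, by omega⟩).1
  rw [he1] at hinv
  have he2' : f ⟨i, hi2⟩ = ⟨i+1, hj2⟩ := he2
  rw [he2'] at hinv
  have := congrArg Fin.val hinv
  simp only [Fin.val_mk] at this
  omega

lemma short_zero_false {n f} : ¬ IsShort n f 0 := by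
  rintro ⟨h1, -, -⟩; omega

lemma short_2n_false {n f} : ¬ IsShort n f (2*n) := by
  rintro ⟨-, h2, -⟩; omega

/-- every vertex of a bubble is uncovered -/
lemma bubble_uncovered {n f} (hf : IsLCD n f) {a b v : ℕ} (hb : IsBubble n f a b)
    (hv1 : a ≤ v) (hv2 : v ≤ b) : ¬ IsShort n f v ∧ ¬ IsShort n f (v-1) := by
  obtain ⟨ha1, hab, hb2n, hno, hl, hr⟩ := hb
  constructor
  · intro hsv
    by_cases hvb : v + 1 ≤ b
    · exact hno v hv1 hvb hsv
    · have hveq : v = b := by omega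
      subst hveq
      rcases hr with h2n | hsb
      · rw [h2n] at hsv; exact short_2n_false hsv
      · exact short_not_succ hf hsv hsb
  · intro hsv
    by_cases hva : a ≤ v - 1
    · have hv1' : 1 ≤ v - 1 := (isShort_bounds hsv).1
      exact hno (v-1) hva (by omega) hsv
    · have hveq : v - 1 = a - 1 := by omega
      rcases hl with h1 | hsa
      · rw [hveq, h1] at hsv
        exact short_zero_false hsv
      · have ha2 : 2 ≤ a := by
          have := (isShort_bounds hsa).1; omega
        have : a - 2 + 1 = a - 1 := by omega
        have hcontra := short_not_succ hf hsa
        rw [this] at hcontra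
        rw [hveq] at hsv
        exact hcontra hsv

lemma bubble_unique {n f} (hf : IsLCD n f) {a b a' b' v : ℕ}
    (h : IsBubble n f a b) (h' : IsBubble n f a' b')
    (h1 : a ≤ v) (h2 : v ≤ b) (h1' : a' ≤ v) (h2' : v ≤ b') : a = a' ∧ b = b' := by
  -- helper for left ends
  have left : ∀ a₁ b₁ a₂ b₂, IsBubble n f a₁ b₁ → IsBubble n f a₂ b₂ →
      a₁ ≤ v → v ≤ b₁ → a₂ ≤ v → v ≤ b₂ → a₁ < a₂ → False := by
    intro a₁ b₁ a₂ b₂ g g' hg1 hg2 hg1' hg2' hlt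
    obtain ⟨ga1, -, -, gno, gl, -⟩ := g
    obtain ⟨-, -, -, -, gl', -⟩ := g'
    have ha2 : 2 ≤ a₂ := by omega
    rcases gl' with h1eq | hsa
    · omega
    · -- short at a₂ - 2
      by_cases hc : a₁ ≤ a₂ - 2
      · exact gno (a₂ - 2) hc (by omega) hsa
      · -- a₂ - 2 = a₁ - 1
        have heq : a₂ - 2 = a₁ - 1 := by omega
        rcases gl with h1 | hsa1
        · rw [heq, h1] at hsa; exact short_zero_false hsa
        · have ha12 : 2 ≤ a₁ := by
            have := (isShort_bounds hsa1).1; omega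
          have hstep : a₁ - 2 + 1 = a₁ - 1 := by omega
          have hcontra := short_not_succ hf hsa1
          rw [hstep] at hcontra
          rw [heq] at hsa
          exact hcontra hsa
  have right : ∀ a₁ b₁ a₂ b₂, IsBubble n f a₁ b₁ → IsBubble n f a₂ b₂ →
      a₁ ≤ v → v ≤ b₁ → a₂ ≤ v → v ≤ b₂ → b₁ < b₂ → False := by
    intro a₁ b₁ a₂ b₂ g g' hg1 hg2 hg1' hg2' hlt
    obtain ⟨-, -, hb1, -, -, gr⟩ := g
    obtain ⟨-, -, hb2, gno', -, gr'⟩ := g'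
    rcases gr with h2n | hsb
    · omega
    · by_cases hc : b₁ + 2 ≤ b₂
      · exact gno' (b₁+1) (by omega) (by omega) hsb
      · have heq : b₂ = b₁ + 1 := by omega
        rcases gr' with h2n' | hsb'
        · have := (isShort_bounds hsb).2; omega
        · rw [heq] at hsb'
          exact short_not_succ hf hsb hsb'
  constructor
  · rcases lt_trichotomy a a' with hlt | he | hgt
    · exact absurd (left a b a' b' h h' h1 h2 h1' h2' hlt) (fun x => x)
    · exact he
    · exact absurd (left a' b' a b h' h h1' h2' h1 h2 hgt) (fun x => x)
  · rcases lt_trichotomy b b' with hlt | he | hgt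
    · exact absurd (right a b a' b' h h' h1 h2 h1' h2' hlt) (fun x => x)
    · exact he
    · exact absurd (right a' b' a b h' h h1' h2' h1 h2 hgt) (fun x => x)

lemma exists_bubble {n f} (hf : IsLCD n f) {v : ℕ} (hv1 : 1 ≤ v) (hv2 : v ≤ 2*n)
    (hu1 : ¬ IsShort n f v) (hu2 : ¬ IsShort n f (v-1)) :
    ∃ a b, IsBubble n f a b ∧ a ≤ v ∧ v ≤ b := by
  classical
  set L := Nat.findGreatest (fun p => IsShort n f p) (v-2) with hL
  set a := if L = 0 then 1 else L + 2 with ha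
  set R := @Finset.filter _ (fun p => IsShort n f p) (Classical.decPred _)
    (Finset.Icc v (2*n-1)) with hR
  have hmemR : ∀ p, p ∈ R ↔ (v ≤ p ∧ p ≤ 2*n-1) ∧ IsShort n f p := by
    intro p; rw [hR, mem_filterF, Finset.mem_Icc]
  set b := if h : R.Nonempty then R.min' h - 1 else 2*n with hb
  have hLle : L ≤ v - 2 := Nat.findGreatest_le (v-2)
  have hav : a ≤ v := by
    rw [ha]
    split
    · omega
    · omega
  have hvb : v ≤ b := by
    rw [hb]
    split
    case isTrue hne =>
      have hm := R.min'_mem hne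
      rw [hmemR] at hm
      have : R.min' hne ≠ v := fun hc => hu1 (hc ▸ hm.2)
      omega
    case isFalse => omega
  have hble : b ≤ 2*n := by
    rw [hb]
    split
    case isTrue hne =>
      have hm := R.min'_mem hne
      rw [hmemR] at hm
      omega
    case isFalse => omega
  refine ⟨a, b, ⟨by rw [ha]; split <;> omega, by omega, hble, ?_, ?_, ?_⟩, hav, hvb⟩
  · -- no short chord inside
    intro i hia hib hsi
    have hibnd := isShort_bounds hsi
    by_cases hlt : i < v
    · by_cases hveq : i = v - 1
      · exact hu2 (hveq ▸ hsi)
      · -- i ≤ v - 2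
        have hile : i ≤ v - 2 := by omega
        have hile2 : i ≤ L := Nat.le_findGreatest hile hsi
        have hL0 : L ≠ 0 := by omega
        rw [ha, if_neg hL0] at hia
        omega
    · -- v ≤ i
      have hiR : i ∈ R := (hmemR i).mpr ⟨⟨by omega, by omega⟩, hsi⟩
      have hne : R.Nonempty := ⟨i, hiR⟩
      have := R.min'_le i hiR
      rw [hb] at hib
      rw [dif_pos hne] at hib
      omega
  · -- left condition
    rw [ha]
    split
    case isTrue => exact Or.inl rfl
    case isFalse hL0 =>
      right
      have : ∃ m, 0 < m ∧ m ≤ v - 2 ∧ IsShort n f m := by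
        by_contra hc
        push_neg at hc
        have : L = 0 := by
          rw [hL]
          rw [Nat.findGreatest_eq_zero_iff]
          intro m hm1 hm2
          exact hc m hm1 hm2
        exact hL0 this
      obtain ⟨m, hm1, hm2, hm3⟩ := this
      have hspec : IsShort n f L := Nat.findGreatest_spec hm2 hm3
      have : L + 2 - 2 = L := by omega
      rw [this]
      exact hspec
  · -- right condition
    rw [hb]
    split
    case isTrue hne =>
      right
      have hm := R.min'_mem hne
      rw [hmemR] at hm
      have : R.min' hne - 1 + 1 = R.min' hne := by omega
      rw [this]
      exact hm.2
    case isFalse => exact Or.inl rfl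

lemma mem_bubSet' {n f} {ab : ℕ × ℕ} : ab ∈ bubSet n f ↔ IsBubble n f ab.1 ab.2 := by
  obtain ⟨a, b⟩ := ab; exact mem_bubSet

lemma cardF_split {β : Type*} (s : Finset β) (p : β → Prop) :
    cardF s p + cardF s (fun x => ¬ p x) = s.card :=
  @Finset.card_filter_add_card_filter_not _ s p (Classical.decPred p)
    (Classical.decPred _)

/-- Per-diagram identity (i): total bubble size plus twice the number of short chords
is `2n`. -/
lemma sum_bubSet_sizes {n : ℕ} {f : Fin (2*n) → Fin (2*n)} (hf : IsLCD n f) (hn : 1 ≤ n) :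
    (∑ ab ∈ bubSet n f, (ab.2 - ab.1 + 1)) + 2 * (shortSet n f).card = 2*n := by
  classical
  -- step 1: sizes are interval cards
  have h1 : ∀ ab ∈ bubSet n f, ab.2 - ab.1 + 1 = (Finset.Icc ab.1 ab.2).card := by
    intro ab hab
    have hb := mem_bubSet'.mp hab
    obtain ⟨hb1, hb2, -⟩ := hb
    rw [Nat.card_Icc]
    omega
  rw [Finset.sum_congr rfl h1]
  -- step 2: disjointness
  have hdisj : ∀ ab ∈ bubSet n f, ∀ ab' ∈ bubSet n f, ab ≠ ab' →
      Disjoint (Finset.Icc ab.1 ab.2) (Finset.Icc ab'.1 ab'.2) := by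
    intro ab hab ab' hab' hne
    rw [Finset.disjoint_left]
    intro v hv hv'
    rw [Finset.mem_Icc] at hv hv'
    have := bubble_unique hf (mem_bubSet'.mp hab) (mem_bubSet'.mp hab')
      hv.1 hv.2 hv'.1 hv'.2
    exact hne (Prod.ext this.1 this.2)
  rw [← Finset.card_biUnion hdisj]
  -- step 3: the union is the uncovered set
  have hUB : (bubSet n f).biUnion (fun ab => Finset.Icc ab.1 ab.2)
      = (Finset.Icc 1 (2*n)).filter
          (fun v => ¬ IsShort n f v ∧ ¬ IsShort n f (v-1)) := by
    ext v
    rw [Finset.mem_biUnion, Finset.mem_filter, Finset.mem_Icc]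
    constructor
    · rintro ⟨ab, hab, hv⟩
      rw [Finset.mem_Icc] at hv
      have hb := mem_bubSet'.mp hab
      obtain ⟨hb1, hb2, hb3, -⟩ := id hb
      exact ⟨⟨by omega, by omega⟩, bubble_uncovered hf hb hv.1 hv.2⟩
    · rintro ⟨⟨hv1, hv2⟩, hu1, hu2⟩
      obtain ⟨a, b, hab, ha, hb⟩ := exists_bubble hf hv1 hv2 hu1 hu2
      exact ⟨(a, b), mem_bubSet'.mpr hab, Finset.mem_Icc.mpr ⟨ha, hb⟩⟩
  rw [hUB]
  -- step 4: covered set has cardinality 2 * #shortSet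
  have hsplit := Finset.card_filter_add_card_filter_not
    (s := Finset.Icc 1 (2*n)) (p := fun v => ¬ IsShort n f v ∧ ¬ IsShort n f (v-1))
  have hcov : (Finset.Icc 1 (2*n)).filter
      (fun v => ¬(¬ IsShort n f v ∧ ¬ IsShort n f (v-1)))
      = shortSet n f ∪ (shortSet n f).image (· + 1) := by
    ext v
    rw [Finset.mem_filter, Finset.mem_union, Finset.mem_image, Finset.mem_Icc]
    constructor
    · rintro ⟨⟨hv1, hv2⟩, hcv⟩
      rw [not_and_or, not_not, not_not] at hcv
      rcases hcv with hs | hs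
      · exact Or.inl (mem_shortSet.mpr hs)
      · refine Or.inr ⟨v - 1, mem_shortSet.mpr hs, ?_⟩
        have := (isShort_bounds hs).1
        omega
    · intro hv
      rcases hv with hs | ⟨i, hi, hiv⟩
      · have hs' := mem_shortSet.mp hs
        have hb := isShort_bounds hs'
        exact ⟨⟨by omega, by omega⟩, fun hc => hc.1 hs'⟩
      · have hs' := mem_shortSet.mp hi
        have hb := isShort_bounds hs'
        subst hiv
        refine ⟨⟨by omega, by omega⟩, fun hc => hc.2 ?_⟩
        have : i + 1 - 1 = i := by omega
        rw [this]
        exact hs'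
  have hdisj2 : Disjoint (shortSet n f) ((shortSet n f).image (· + 1)) := by
    rw [Finset.disjoint_left]
    intro v hv hv'
    rw [Finset.mem_image] at hv'
    obtain ⟨i, hi, hiv⟩ := hv'
    subst hiv
    exact short_not_succ hf (mem_shortSet.mp hi) (mem_shortSet.mp hv)
  have hcard2 : ((Finset.Icc 1 (2*n)).filter
      (fun v => ¬(¬ IsShort n f v ∧ ¬ IsShort n f (v-1)))).card = 2 * (shortSet n f).card := by
    rw [hcov, Finset.card_union_of_disjoint hdisj2,
      Finset.card_image_of_injOn (fun a _ b _ h => by omega)]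
    ring
  rw [Nat.card_Icc] at hsplit
  omega

/-- Per-diagram identity (ii): the number of bubbles plus boundary/adjacency corrections
equals the number of short chords plus one. -/
lemma card_bubSet_eq {n : ℕ} {f : Fin (2*n) → Fin (2*n)} (hf : IsLCD n f) (hn : 1 ≤ n) :
    (bubSet n f).card
      + (cardF {1} (fun i => IsShort n f i) + cardF {2*n-1} (fun i => IsShort n f i)
        + cardF (shortSet n f) (fun i => IsShort n f (i+2)))
      = (shortSet n f).card + 1 := by
  classical
  set E : Finset ℕ := @Finset.filter _ (fun b => b = 2*n ∨ IsShort n f (b+1))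
    (Classical.decPred _) (Finset.Icc 1 (2*n)) with hE
  have hmemE : ∀ b, b ∈ E ↔ (1 ≤ b ∧ b ≤ 2*n) ∧ (b = 2*n ∨ IsShort n f (b+1)) := by
    intro b; rw [hE, mem_filterF, Finset.mem_Icc]
  set pU : ℕ → Prop := fun v => ¬ IsShort n f v ∧ ¬ IsShort n f (v-1) with hpU
  -- (ii-a) : bubbles biject with good right ends
  have hgood : (bubSet n f).card = cardF E pU := by
    unfold cardF
    refine Finset.card_bij (fun ab _ => ab.2) ?_ ?_ ?_
    · intro ab hab
      have hb := mem_bubSet'.mp hab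
      obtain ⟨hb1, hb2, hb3, -, -, hbr⟩ := id hb
      rw [mem_filterF, hmemE]
      exact ⟨⟨⟨by omega, hb3⟩, hbr⟩, bubble_uncovered hf hb hb2 le_rfl⟩
    · intro ab hab ab' hab' he
      have hb := mem_bubSet'.mp hab
      have hb' := mem_bubSet'.mp hab'
      have hab2 : ab.1 ≤ ab.2 := hb.2.1
      have hab2' : ab'.1 ≤ ab'.2 := hb'.2.1
      rw [← he] at hb' hab2'
      have := bubble_unique hf hb hb' hab2 le_rfl hab2' le_rfl
      exact Prod.ext this.1 (by rw [← he])
    · intro b hbmem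
      rw [mem_filterF, hmemE] at hbmem
      obtain ⟨⟨⟨hb1, hb2⟩, hbE⟩, hu1, hu2⟩ := hbmem
      obtain ⟨a0, b0, hbub, ha0, hb0⟩ := exists_bubble hf hb1 hb2 hu1 hu2
      have hb0eq : b0 = b := by
        by_contra hne
        have hlt : b < b0 := by omega
        rcases hbE with h2n | hsb
        · have := hbub.2.2.1; omega
        · by_cases hc : b + 2 ≤ b0
          · exact hbub.2.2.2.1 (b+1) (by omega) (by omega) hsb
          · have hb0b : b0 = b + 1 := by omega
            have := (bubble_uncovered hf hbub (by omega) (le_refl b0)).2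
            rw [hb0b] at this
            simp only [Nat.add_sub_cancel] at this
            exact (bubble_uncovered hf hbub (by omega) (le_refl b0)).1 (hb0b ▸ hsb)
      exact ⟨(a0, b), mem_bubSet'.mpr (by rw [← hb0eq]; exact hbub), rfl⟩
  -- (ii-b) : split E into good and bad
  have hsplit : cardF E pU + cardF E (fun v => ¬ pU v) = E.card := cardF_split E pU
  -- (ii-c) : card of E
  have hc1 : E.card + (if IsShort n f 1 then 1 else 0) = (shortSet n f).card + 1 := by
    have hEeq : E = insert (2*n)
        ((@Finset.filter _ (fun p => 2 ≤ p) (Classical.decPred _) (shortSet n f)).image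
          (· - 1)) := by
      ext b
      rw [hmemE, Finset.mem_insert, Finset.mem_image]
      constructor
      · rintro ⟨⟨hb1, hb2⟩, h2n | hsb⟩
        · exact Or.inl h2n
        · refine Or.inr ⟨b + 1, ?_, by omega⟩
          rw [mem_filterF]
          exact ⟨mem_shortSet.mpr hsb, by omega⟩
      · rintro (h2n | ⟨p, hp, hpb⟩)
        · exact ⟨⟨by omega, by omega⟩, Or.inl h2n⟩
        · rw [mem_filterF] at hp
          obtain ⟨hps, hp2⟩ := hp
          have hb := isShort_bounds (mem_shortSet.mp hps)
          subst hpb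
          refine ⟨⟨by omega, by omega⟩, Or.inr ?_⟩
          have : p - 1 + 1 = p := by omega
          rw [this]
          exact mem_shortSet.mp hps
    have hnotmem : (2*n) ∉ (@Finset.filter _ (fun p => 2 ≤ p) (Classical.decPred _)
        (shortSet n f)).image (· - 1) := by
      rw [Finset.mem_image]
      rintro ⟨p, hp, hpb⟩
      rw [mem_filterF] at hp
      have hb := isShort_bounds (mem_shortSet.mp hp.1)
      omega
    have hinj : Set.InjOn (· - 1)
        ↑(@Finset.filter _ (fun p => 2 ≤ p) (Classical.decPred _) (shortSet n f)) := by
      intro x hx y hy hxy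
      rw [Finset.mem_coe, mem_filterF] at hx hy
      simp only at hxy
      omega
    have hfc : cardF (shortSet n f) (fun p => 2 ≤ p)
        + (if IsShort n f 1 then 1 else 0) = (shortSet n f).card := by
      have := cardF_split (shortSet n f) (fun p => 2 ≤ p)
      have h01 : cardF (shortSet n f) (fun p => ¬ 2 ≤ p)
          = (if IsShort n f 1 then 1 else 0) := by
        unfold cardF
        split
        case isTrue hS1 =>
          have : @Finset.filter _ (fun p => ¬ 2 ≤ p) (Classical.decPred _) (shortSet n f)
              = {1} := by
            ext i
            rw [mem_filterF, Finset.mem_singleton]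
            constructor
            · rintro ⟨hi, h2i⟩
              have := isShort_bounds (mem_shortSet.mp hi)
              omega
            · rintro rfl
              exact ⟨mem_shortSet.mpr hS1, by omega⟩
          rw [this]
          rfl
        case isFalse hS1 =>
          have : @Finset.filter _ (fun p => ¬ 2 ≤ p) (Classical.decPred _) (shortSet n f)
              = ∅ := by
            ext i
            rw [mem_filterF]
            simp only [Finset.notMem_empty, iff_false]
            rintro ⟨hi, h2i⟩
            have := isShort_bounds (mem_shortSet.mp hi)
            have : i = 1 := by omega
            exact hS1 (this ▸ mem_shortSet.mp hi)
          rw [this]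
          rfl
      omega
    rw [hEeq, Finset.card_insert_of_notMem hnotmem, Finset.card_image_of_injOn hinj]
    have : (@Finset.filter _ (fun p => 2 ≤ p) (Classical.decPred _) (shortSet n f)).card
        = cardF (shortSet n f) (fun p => 2 ≤ p) := rfl
    rw [this]
    omega
  -- (ii-d) : card of bad set
  have hc2 : cardF E (fun v => ¬ pU v)
      = (if IsShort n f (2*n-1) then 1 else 0)
        + cardF (shortSet n f) (fun i => IsShort n f (i+2)) := by
    unfold cardF
    have hbadeq : @Finset.filter _ (fun v => ¬ pU v) (Classical.decPred _) E
        = (if IsShort n f (2*n-1) then ({2*n} : Finset ℕ) else ∅)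
          ∪ (@Finset.filter _ (fun i => IsShort n f (i+2)) (Classical.decPred _)
              (shortSet n f)).image (· + 1) := by
      ext b
      rw [mem_filterF, Finset.mem_union, Finset.mem_image]
      constructor
      · rintro ⟨hbE, hbad⟩
        rw [hmemE] at hbE
        rw [hpU, not_and_or, not_not, not_not] at hbad
        obtain ⟨⟨hb1, hb2⟩, hEc⟩ := hbE
        rcases hEc with h2n | hsb
        · subst h2n
          rcases hbad with hs | hs
          · exact absurd hs short_2n_false
          · left
            rw [if_pos (by
                have h21 : 2*n - 1 = 2*n - 1 := rfl
                convert hs using 2)]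
            exact Finset.mem_singleton_self _
        · rcases hbad with hs | hs
          · exact absurd hsb (short_not_succ hf hs)
          · right
            refine ⟨b - 1, ?_, by omega⟩
            rw [mem_filterF]
            have hbb := isShort_bounds hs
            constructor
            · exact mem_shortSet.mpr hs
            · have : b - 1 + 2 = b + 1 := by omega
              rw [this]
              exact hsb
      · rintro (hb | ⟨i, hi, hib⟩)
        · by_cases hS : IsShort n f (2*n-1)
          · rw [if_pos hS, Finset.mem_singleton] at hb
            subst hb
            constructor
            · rw [hmemE]; exact ⟨⟨by omega, le_rfl⟩, Or.inl rfl⟩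
            · rw [hpU, not_and_or, not_not, not_not]
              exact Or.inr hS
          · rw [if_neg hS] at hb
            exact absurd hb (Finset.notMem_empty _)
        · rw [mem_filterF] at hi
          obtain ⟨his, hi2⟩ := hi
          have hbb := isShort_bounds (mem_shortSet.mp his)
          have hbb2 := isShort_bounds hi2
          subst hib
          constructor
          · rw [hmemE]
            refine ⟨⟨by omega, by omega⟩, Or.inr ?_⟩
            have : i + 1 + 1 = i + 2 := by omega
            rw [this]
            exact hi2
          · rw [hpU, not_and_or, not_not, not_not]
            right
            have : i + 1 - 1 = i := by omega
            rw [this]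
            exact mem_shortSet.mp his
    rw [hbadeq]
    have hdisj3 : Disjoint (if IsShort n f (2*n-1) then ({2*n} : Finset ℕ) else ∅)
        ((@Finset.filter _ (fun i => IsShort n f (i+2)) (Classical.decPred _)
            (shortSet n f)).image (· + 1)) := by
      rw [Finset.disjoint_left]
      intro v hv hv'
      split at hv
      case isTrue =>
        rw [Finset.mem_singleton] at hv
        subst hv
        rw [Finset.mem_image] at hv'
        obtain ⟨i, hi, hib⟩ := hv'
        rw [mem_filterF] at hi
        have := isShort_bounds hi.2
        omega
      case isFalse => exact absurd hv (Finset.notMem_empty _)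
    rw [Finset.card_union_of_disjoint hdisj3,
      Finset.card_image_of_injOn (fun a _ b _ h => by omega)]
    congr 1
    split <;> simp
  have e1 : cardF {1} (fun i => IsShort n f i) = if IsShort n f 1 then 1 else 0 := by
    by_cases hS : IsShort n f 1
    · rw [if_pos hS]; exact cardF_singleton_pos hS
    · rw [if_neg hS]; exact cardF_singleton_neg hS
  have e2 : cardF {2*n-1} (fun i => IsShort n f i)
      = if IsShort n f (2*n-1) then 1 else 0 := by
    by_cases hS : IsShort n f (2*n-1)
    · rw [if_pos hS]; exact cardF_singleton_pos hS
    · rw [if_neg hS]; exact cardF_singleton_neg hS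
  omega

lemma mem_invoS_lcd {n : ℕ} {f : Fin (2*n) → Fin (2*n)} :
    f ∈ invoS (Fin (2*n)) ↔ IsLCD n f := mem_invoS

lemma isShort_iff {n : ℕ} {f : Fin (2*n) → Fin (2*n)} {i : ℕ} (h1 : 1 ≤ i) (h2 : i < 2*n) :
    IsShort n f i ↔ f ⟨i-1, by omega⟩ = ⟨i, h2⟩ := by
  constructor
  · rintro ⟨h1', h2', he⟩; exact he
  · intro he; exact ⟨h1, h2, he⟩

lemma cardF_filter {β : Type*} (s : Finset β) (p q : β → Prop) :
    cardF (@Finset.filter β p (Classical.decPred p) s) q = cardF s (fun x => p x ∧ q x) := by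
  unfold cardF
  refine congrArg Finset.card ?_
  ext x
  rw [mem_filterF, mem_filterF, mem_filterF]
  tauto

lemma sum_cardF_swap {γ δ : Type*} (s : Finset γ) (t : Finset δ) (p : γ → δ → Prop) :
    ∑ f ∈ s, cardF t (p f) = ∑ i ∈ t, cardF s (fun f => p f i) := by
  unfold cardF
  refine Eq.trans (Finset.sum_congr rfl (fun f _ => Finset.card_filter _ _)) ?_
  refine Eq.trans Finset.sum_comm ?_
  exact Finset.sum_congr rfl (fun i _ => (Finset.card_filter _ _).symm)

lemma count_short (n i : ℕ) (h1 : 1 ≤ i) (h2 : i < 2*n) :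
    cardF (invoS (Fin (2*n))) (fun f => IsShort n f i) = tc (2*n-2) := by
  have hne : (⟨i-1, by omega⟩ : Fin (2*n)) ≠ ⟨i, h2⟩ := by
    simp only [ne_eq, Fin.mk.injEq]
    omega
  have hcong : cardF (invoS (Fin (2*n))) (fun f => IsShort n f i)
      = cardF (invoS (Fin (2*n))) (fun f => f ⟨i-1, by omega⟩ = ⟨i, h2⟩) :=
    cardF_congr _ (fun f _ => isShort_iff h1 h2)
  rw [hcong, chord_card_one _ _ hne]
  have : Fintype.card (Fin (2*n)) - 2 = 2*n - 2 := by simp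
  rw [this]

lemma count_short2 (n i : ℕ) (h1 : 1 ≤ i) (h2 : i + 2 < 2*n) :
    cardF (invoS (Fin (2*n))) (fun f => IsShort n f i ∧ IsShort n f (i+2)) = tc (2*n-4) := by
  have hi1 : i - 1 < 2*n := by omega
  have hi0 : i < 2*n := by omega
  have hip : i + 1 < 2*n := by omega
  have d1 : (⟨i-1, hi1⟩ : Fin (2*n)) ≠ ⟨i, hi0⟩ := by
    simp only [ne_eq, Fin.mk.injEq]; omega
  have d2 : (⟨i+1, hip⟩ : Fin (2*n)) ≠ ⟨i-1, hi1⟩ ∧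
      (⟨i+1, hip⟩ : Fin (2*n)) ≠ ⟨i, hi0⟩ := by
    constructor <;> (simp only [ne_eq, Fin.mk.injEq]; omega)
  have d3 : (⟨i+2, h2⟩ : Fin (2*n)) ≠ ⟨i-1, hi1⟩ ∧
      (⟨i+2, h2⟩ : Fin (2*n)) ≠ ⟨i, hi0⟩ := by
    constructor <;> (simp only [ne_eq, Fin.mk.injEq]; omega)
  have d4 : (⟨i+1, hip⟩ : Fin (2*n)) ≠ ⟨i+2, h2⟩ := by
    simp only [ne_eq, Fin.mk.injEq]; omega
  have hcong : cardF (invoS (Fin (2*n))) (fun f => IsShort n f i ∧ IsShort n f (i+2))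
      = cardF (invoS (Fin (2*n)))
          (fun f => f ⟨i-1, hi1⟩ = ⟨i, hi0⟩ ∧ f ⟨i+1, hip⟩ = ⟨i+2, h2⟩) :=
    cardF_congr _ (fun f _ => by
      constructor
      · rintro ⟨hs1, hs2⟩
        obtain ⟨ha1, hb1, he1⟩ := hs1
        obtain ⟨ha2, hb2, he2⟩ := hs2
        exact ⟨he1, he2⟩
      · rintro ⟨he1, he2⟩
        exact ⟨⟨h1, hi0, he1⟩, ⟨by omega, h2, he2⟩⟩)
  have hres := chord_card_two (α := Fin (2*n)) ⟨i-1, hi1⟩ ⟨i, hi0⟩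
    ⟨i+1, hip⟩ ⟨i+2, h2⟩ d1 d2 d3 d4
  rw [hcong, hres]
  have : Fintype.card (Fin (2*n)) - 4 = 2*n - 4 := by simp
  rw [this]

lemma count_short2_zero (n i : ℕ) (h2 : ¬ (i + 2 < 2*n)) :
    cardF (invoS (Fin (2*n))) (fun f => IsShort n f i ∧ IsShort n f (i+2)) = 0 := by
  unfold cardF
  rw [Finset.card_eq_zero, Finset.eq_empty_iff_forall_notMem]
  intro f hf
  rw [mem_filterF] at hf
  exact h2 (isShort_bounds hf.2.2).2

lemma sum_shortSet_card (n : ℕ) (hn : 1 ≤ n) :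
    ∑ f ∈ invoS (Fin (2*n)), (shortSet n f).card = (2*n-1) * tc (2*n-2) := by
  have h0 : ∀ f, (shortSet n f).card
      = cardF (Finset.Icc 1 (2*n-1)) (fun i => IsShort n f i) := fun f => rfl
  calc ∑ f ∈ invoS (Fin (2*n)), (shortSet n f).card
      = ∑ f ∈ invoS (Fin (2*n)), cardF (Finset.Icc 1 (2*n-1)) (fun i => IsShort n f i) :=
        Finset.sum_congr rfl (fun f _ => h0 f)
    _ = ∑ i ∈ Finset.Icc 1 (2*n-1), cardF (invoS (Fin (2*n))) (fun f => IsShort n f i) :=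
        sum_cardF_swap _ _ _
    _ = ∑ _i ∈ Finset.Icc 1 (2*n-1), tc (2*n-2) :=
        Finset.sum_congr rfl (fun i hi => by
          rw [Finset.mem_Icc] at hi
          exact count_short n i hi.1 (by omega))
    _ = (2*n-1) * tc (2*n-2) := by
        rw [Finset.sum_const, Nat.card_Icc, smul_eq_mul, Nat.add_sub_cancel]

lemma sum_ind1 (n : ℕ) (hn : 1 ≤ n) :
    ∑ f ∈ invoS (Fin (2*n)), cardF {1} (fun i => IsShort n f i) = tc (2*n-2) := by
  rw [sum_cardF_swap (invoS (Fin (2*n))) {1} (fun f i => IsShort n f i),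
    Finset.sum_singleton]
  exact count_short n 1 le_rfl (by omega)

lemma sum_ind2 (n : ℕ) (hn : 1 ≤ n) :
    ∑ f ∈ invoS (Fin (2*n)), cardF {2*n-1} (fun i => IsShort n f i) = tc (2*n-2) := by
  rw [sum_cardF_swap (invoS (Fin (2*n))) {2*n-1} (fun f i => IsShort n f i),
    Finset.sum_singleton]
  exact count_short n (2*n-1) (by omega) (by omega)

lemma sum_W (n : ℕ) (hn : 2 ≤ n) :
    ∑ f ∈ invoS (Fin (2*n)), cardF (shortSet n f) (fun i => IsShort n f (i+2))
      = (2*n-3) * tc (2*n-4) := by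
  have h0 : ∀ f : Fin (2*n) → Fin (2*n), cardF (shortSet n f) (fun i => IsShort n f (i+2))
      = cardF (Finset.Icc 1 (2*n-1)) (fun i => IsShort n f i ∧ IsShort n f (i+2)) := by
    intro f
    rw [shortSet]
    exact cardF_filter _ _ _
  calc ∑ f ∈ invoS (Fin (2*n)), cardF (shortSet n f) (fun i => IsShort n f (i+2))
      = ∑ f ∈ invoS (Fin (2*n)),
          cardF (Finset.Icc 1 (2*n-1)) (fun i => IsShort n f i ∧ IsShort n f (i+2)) :=
        Finset.sum_congr rfl (fun f _ => h0 f)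
    _ = ∑ i ∈ Finset.Icc 1 (2*n-1),
          cardF (invoS (Fin (2*n))) (fun f => IsShort n f i ∧ IsShort n f (i+2)) :=
        sum_cardF_swap _ _ _
    _ = ∑ i ∈ Finset.Icc 1 (2*n-3),
          cardF (invoS (Fin (2*n))) (fun f => IsShort n f i ∧ IsShort n f (i+2)) :=
        (Finset.sum_subset (Finset.Icc_subset_Icc_right (by omega))
          (fun i hi hni => by
            rw [Finset.mem_Icc] at hi
            rw [Finset.mem_Icc] at hni
            exact count_short2_zero n i (by omega))).symm
    _ = ∑ _i ∈ Finset.Icc 1 (2*n-3), tc (2*n-4) :=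
        Finset.sum_congr rfl (fun i hi => by
          rw [Finset.mem_Icc] at hi
          exact count_short2 n i hi.1 (by omega))
    _ = (2*n-3) * tc (2*n-4) := by
        rw [Finset.sum_const, Nat.card_Icc, smul_eq_mul, Nat.add_sub_cancel]

lemma card_invoS_tc (n : ℕ) : (invoS (Fin (2*n))).card = tc (2*n) := rfl

lemma sum_B_bridge (n : ℕ) (hn : 1 ≤ n) :
    (∑ p ∈ Finset.Icc 1 (2*n), B n p) = ∑ f ∈ invoS (Fin (2*n)), (bubSet n f).card ∧
    (∑ p ∈ Finset.Icc 1 (2*n), p * B n p)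
      = ∑ f ∈ invoS (Fin (2*n)), ∑ ab ∈ bubSet n f, (ab.2 - ab.1 + 1) := by
  classical
  set X := (Finset.univ ×ˢ (Finset.Icc 1 (2*n) ×ˢ Finset.Icc 1 (2*n))).filter
    (fun x : (Fin (2*n) → Fin (2*n)) × ℕ × ℕ => IsLCD n x.1 ∧ IsBubble n x.1 x.2.1 x.2.2)
    with hX
  have hmemX : ∀ x, x ∈ X ↔ IsLCD n x.1 ∧ IsBubble n x.1 x.2.1 x.2.2 := by
    intro x
    rw [hX, Finset.mem_filter]
    constructor
    · exact fun h => h.2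
    · intro h
      refine ⟨?_, h⟩
      obtain ⟨hb1, hb2, hb3, -⟩ := h.2
      simp only [Finset.mem_product, Finset.mem_univ, Finset.mem_Icc, true_and]
      omega
  have hBp : ∀ p, B n p = (X.filter (fun x => x.2.2 - x.2.1 + 1 = p)).card := by
    intro p
    rw [B]
    refine congrArg Finset.card ?_
    ext x
    rw [Finset.mem_filter, Finset.mem_filter, hmemX x]
    constructor
    · rintro ⟨hbig, hlcd, hbub, hsz⟩
      exact ⟨⟨hlcd, hbub⟩, hsz⟩
    · rintro ⟨⟨hlcd, hbub⟩, hsz⟩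
      refine ⟨?_, hlcd, hbub, hsz⟩
      obtain ⟨hb1, hb2, hb3, -⟩ := hbub
      simp only [Finset.mem_product, Finset.mem_univ, Finset.mem_Icc, true_and]
      omega
  have hmaps : ∀ x ∈ X, x.2.2 - x.2.1 + 1 ∈ Finset.Icc 1 (2*n) := by
    intro x hx
    obtain ⟨-, hb1, hb2, hb3, -⟩ := (hmemX x).mp hx
    rw [Finset.mem_Icc]
    omega
  have hmaps1 : ∀ x ∈ X, x.1 ∈ invoS (Fin (2*n)) :=
    fun x hx => mem_invoS_lcd.mpr ((hmemX x).mp hx).1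
  have hfibermem : ∀ (f : Fin (2*n) → Fin (2*n)), f ∈ invoS (Fin (2*n)) →
      ∀ x, (x ∈ X.filter (fun x => x.1 = f) ↔ x.1 = f ∧ IsBubble n f x.2.1 x.2.2) := by
    intro f hf x
    rw [Finset.mem_filter, hmemX x]
    constructor
    · rintro ⟨⟨hlcd, hbub⟩, h1⟩
      exact ⟨h1, h1 ▸ hbub⟩
    · rintro ⟨h1, hbub⟩
      exact ⟨⟨h1 ▸ mem_invoS_lcd.mp hf, h1 ▸ hbub⟩, h1⟩
  -- fiber over f is in bijection with bubSet n f
  have hfmaps : ∀ (f : Fin (2*n) → Fin (2*n)), f ∈ invoS (Fin (2*n)) →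
      ∀ x ∈ X.filter (fun x => x.1 = f), x.2 ∈ bubSet n f := by
    intro f hf x hx
    obtain ⟨h1, hbub⟩ := (hfibermem f hf x).mp hx
    exact mem_bubSet'.mpr hbub
  have hfinj : ∀ (f : Fin (2*n) → Fin (2*n)),
      Set.InjOn (fun x : (Fin (2*n) → Fin (2*n)) × ℕ × ℕ => x.2)
        ↑(X.filter (fun x => x.1 = f)) := by
    intro f x hx y hy hxy
    rw [Finset.mem_coe, Finset.mem_filter] at hx hy
    exact Prod.ext (hx.2.trans hy.2.symm) hxy
  have hfsurj : ∀ (f : Fin (2*n) → Fin (2*n)), f ∈ invoS (Fin (2*n)) →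
      Set.SurjOn (fun x : (Fin (2*n) → Fin (2*n)) × ℕ × ℕ => x.2)
        ↑(X.filter (fun x => x.1 = f)) ↑(bubSet n f) := by
    intro f hf ab hab
    rw [Finset.mem_coe] at hab
    refine ⟨(f, ab), ?_, rfl⟩
    rw [Finset.mem_coe]
    exact (hfibermem f hf (f, ab)).mpr ⟨rfl, mem_bubSet'.mp hab⟩
  constructor
  · calc ∑ p ∈ Finset.Icc 1 (2*n), B n p
        = ∑ p ∈ Finset.Icc 1 (2*n), (X.filter (fun x => x.2.2 - x.2.1 + 1 = p)).card :=
          Finset.sum_congr rfl (fun p _ => hBp p)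
      _ = X.card := (Finset.card_eq_sum_card_fiberwise hmaps).symm
      _ = ∑ f ∈ invoS (Fin (2*n)), (X.filter (fun x => x.1 = f)).card :=
          Finset.card_eq_sum_card_fiberwise hmaps1
      _ = ∑ f ∈ invoS (Fin (2*n)), (bubSet n f).card :=
          Finset.sum_congr rfl (fun f hf =>
            Finset.card_nbij (fun x => x.2) (hfmaps f hf) (hfinj f) (hfsurj f hf))
  · calc ∑ p ∈ Finset.Icc 1 (2*n), p * B n p
        = ∑ p ∈ Finset.Icc 1 (2*n),
            ∑ x ∈ X.filter (fun x => x.2.2 - x.2.1 + 1 = p), (x.2.2 - x.2.1 + 1) := by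
          refine Finset.sum_congr rfl (fun p _ => ?_)
          rw [hBp p]
          rw [Finset.sum_congr rfl
            (fun x hx => (Finset.mem_filter.mp hx).2), Finset.sum_const, smul_eq_mul,
            mul_comm]
      _ = ∑ x ∈ X, (x.2.2 - x.2.1 + 1) := Finset.sum_fiberwise_of_maps_to hmaps _
      _ = ∑ f ∈ invoS (Fin (2*n)),
            ∑ x ∈ X.filter (fun x => x.1 = f), (x.2.2 - x.2.1 + 1) :=
          (Finset.sum_fiberwise_of_maps_to hmaps1 _).symm
      _ = ∑ f ∈ invoS (Fin (2*n)), ∑ ab ∈ bubSet n f, (ab.2 - ab.1 + 1) :=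
          Finset.sum_congr rfl (fun f hf =>
            Finset.sum_nbij (fun x => x.2) (hfmaps f hf) (hfinj f) (hfsurj f hf)
              (fun x _ => rfl))

lemma sumpB_closed (n : ℕ) (hn : 2 ≤ n) :
    ∑ p ∈ Finset.Icc 1 (2*n), p * B n p = ((2*n-2)*(2*n-1)) * tc (2*n-2) := by
  have hb := (sum_B_bridge n (by omega)).2
  have hper : ∀ f ∈ invoS (Fin (2*n)),
      (∑ ab ∈ bubSet n f, (ab.2 - ab.1 + 1)) + 2 * (shortSet n f).card = 2*n :=
    fun f hf => sum_bubSet_sizes (mem_invoS_lcd.mp hf) (by omega)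
  have hsum : (∑ f ∈ invoS (Fin (2*n)), ∑ ab ∈ bubSet n f, (ab.2 - ab.1 + 1))
      + 2 * ∑ f ∈ invoS (Fin (2*n)), (shortSet n f).card
      = tc (2*n) * (2*n) := by
    rw [Finset.mul_sum, ← Finset.sum_add_distrib, Finset.sum_congr rfl hper,
      Finset.sum_const, smul_eq_mul, card_invoS_tc]
  rw [hb]
  rw [sum_shortSet_card n (by omega)] at hsum
  have htc : tc (2*n) = (2*n-1) * tc (2*n-2) := by
    have h := tc_succ (2*n-2)
    have e1 : 2*n-2+2 = 2*n := by omega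
    have e2 : 2*n-2+1 = 2*n-1 := by omega
    rw [e1, e2] at h
    exact h
  rw [htc] at hsum
  have key : ((2*n-1) * tc (2*n-2)) * (2*n)
      = ((2*n-2)*(2*n-1)) * tc (2*n-2) + 2 * ((2*n-1) * tc (2*n-2)) := by
    have h2 : 2*n = (2*n-2) + 2 := by omega
    calc ((2*n-1) * tc (2*n-2)) * (2*n)
        = ((2*n-1) * tc (2*n-2)) * ((2*n-2) + 2) := by rw [← h2]
      _ = ((2*n-2)*(2*n-1)) * tc (2*n-2) + 2 * ((2*n-1) * tc (2*n-2)) := by ring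
  rw [key] at hsum
  omega

lemma sumB_closed (n : ℕ) (hn : 2 ≤ n) :
    ∑ p ∈ Finset.Icc 1 (2*n), B n p = (4*n-5) * tc (2*n-2) := by
  have hb := (sum_B_bridge n (by omega)).1
  have hper : ∀ f ∈ invoS (Fin (2*n)),
      (bubSet n f).card
        + (cardF {1} (fun i => IsShort n f i) + cardF {2*n-1} (fun i => IsShort n f i)
          + cardF (shortSet n f) (fun i => IsShort n f (i+2)))
      = (shortSet n f).card + 1 :=
    fun f hf => card_bubSet_eq (mem_invoS_lcd.mp hf) (by omega)
  have hsum := Finset.sum_congr rfl hper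
  simp only [Finset.sum_add_distrib] at hsum
  rw [sum_ind1 n (by omega), sum_ind2 n (by omega), sum_W n hn,
    sum_shortSet_card n (by omega), Finset.sum_const, smul_eq_mul, mul_one,
    card_invoS_tc] at hsum
  have htc : tc (2*n) = (2*n-1) * tc (2*n-2) := by
    have h := tc_succ (2*n-2)
    have e1 : 2*n-2+2 = 2*n := by omega
    have e2 : 2*n-2+1 = 2*n-1 := by omega
    rw [e1, e2] at h
    exact h
  have htc2 : (2*n-3) * tc (2*n-4) = tc (2*n-2) := by
    have h := tc_succ (2*n-4)
    have e1 : 2*n-4+2 = 2*n-2 := by omega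
    have e2 : 2*n-4+1 = 2*n-3 := by omega
    rw [e1, e2] at h
    exact h.symm
  rw [htc, htc2] at hsum
  -- hsum : ∑B + (c + c + c) = (2n-1)c + (2n-1)c
  have key : (2*n-1) * tc (2*n-2) + (2*n-1) * tc (2*n-2)
      = (4*n-5) * tc (2*n-2)
        + (tc (2*n-2) + tc (2*n-2) + tc (2*n-2)) := by
    have h1 : (2*n-1) + (2*n-1) = (4*n-5) + 3 := by omega
    calc (2*n-1) * tc (2*n-2) + (2*n-1) * tc (2*n-2)
        = ((2*n-1) + (2*n-1)) * tc (2*n-2) := by ring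
      _ = ((4*n-5) + 3) * tc (2*n-2) := by rw [h1]
      _ = (4*n-5) * tc (2*n-2) + (tc (2*n-2) + tc (2*n-2) + tc (2*n-2)) := by ring
  rw [key] at hsum
  rw [hb]
  omega

lemma tc_even_ne_zero (n : ℕ) (hn : 1 ≤ n) : tc (2*n - 2) ≠ 0 := by
  have h2 : 2*n - 2 = 2*(n-1) := by omega
  rw [h2]
  exact (tc_even_pos (n-1)).ne'

/-- The mean bubble size over all linear chord diagrams on `2n` vertices is
asymptotic to `n`. -/
theorem mean_bubble_size_asymptotic :
    Filter.Tendsto (fun n : ℕ =>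
      ((∑ p ∈ Finset.Icc 1 (2*n), p * B n p : ℕ) : ℝ) /
        ((n : ℝ) * ((∑ p ∈ Finset.Icc 1 (2*n), B n p : ℕ) : ℝ)))
      Filter.atTop (nhds 1) := by
  have h0 : Filter.Tendsto (fun n : ℕ => 1/(n:ℝ)) Filter.atTop (nhds 0) :=
    tendsto_one_div_atTop_nhds_zero_nat
  have hA : Filter.Tendsto (fun n : ℕ => (2:ℝ) - 2*(1/n)) Filter.atTop (nhds 2) := by
    have := tendsto_const_nhds (x := (2:ℝ)) (f := Filter.atTop (α := ℕ))
    simpa using this.sub (h0.const_mul (2:ℝ))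
  have hB : Filter.Tendsto (fun n : ℕ => (2:ℝ) - 1*(1/n)) Filter.atTop (nhds 2) := by
    have := tendsto_const_nhds (x := (2:ℝ)) (f := Filter.atTop (α := ℕ))
    simpa using this.sub (h0.const_mul (1:ℝ))
  have hC : Filter.Tendsto (fun n : ℕ => (4:ℝ) - 5*(1/n)) Filter.atTop (nhds 4) := by
    have := tendsto_const_nhds (x := (4:ℝ)) (f := Filter.atTop (α := ℕ))
    simpa using this.sub (h0.const_mul (5:ℝ))
  have hg : Filter.Tendsto (fun n : ℕ =>
      (((2:ℝ) - 2*(1/n)) * ((2:ℝ) - 1*(1/n))) / ((4:ℝ) - 5*(1/n)))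
      Filter.atTop (nhds 1) := by
    have hthis := (hA.mul hB).div hC (by norm_num : (4:ℝ) ≠ 0)
    have h1 : (2:ℝ) * 2 / 4 = 1 := by norm_num
    rw [h1] at hthis
    exact hthis
  refine Filter.Tendsto.congr' ?_ hg
  filter_upwards [Filter.eventually_ge_atTop 2] with n hn
  have hc : (0:ℝ) < (tc (2*n-2) : ℝ) := by
    exact_mod_cast Nat.pos_of_ne_zero (tc_even_ne_zero n (by omega))
  have hn0 : (n:ℝ) ≠ 0 := by
    have : (2:ℝ) ≤ (n:ℝ) := by exact_mod_cast hn
    linarith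
  have hnR : (2:ℝ) ≤ (n:ℝ) := by exact_mod_cast hn
  rw [sumpB_closed n hn, sumB_closed n hn]
  have e1 : ((2*n - 2 : ℕ) : ℝ) = 2*(n:ℝ) - 2 := by
    rw [Nat.cast_sub (by omega)]
    push_cast
    ring
  have e2 : ((2*n - 1 : ℕ) : ℝ) = 2*(n:ℝ) - 1 := by
    rw [Nat.cast_sub (by omega)]
    push_cast
    ring
  have e3 : ((4*n - 5 : ℕ) : ℝ) = 4*(n:ℝ) - 5 := by
    rw [Nat.cast_sub (by omega)]
    push_cast
    ring
  push_cast [e1, e2, e3]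
  have h45 : (4:ℝ)*(n:ℝ) - 5 ≠ 0 := by linarith
  field_simp
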